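/- Let d ≥ 3 and s₀ ≥ 0. Let f, h, x, y be continuously differentiable real functions with L(s,t) = st + h(s), f(y(s)) = L(s, y(s)) and −f(−x(s)) = L(s, −x(s)) for all s > s₀, with −x(s) < y(s) and f(t)² > L(s,t)² for t ∈ (−x(s), y(s)). Assume ∫_{−x(s)}^{y(s)} (t + h'(s)) (f(t)² − L(s,t)²)^{(d−2)/2} dt = 0 for all s > s₀, and that the function s ↦ γ_{d−2}√(1+s²)∫_{−x(s)}^{y(s)}(f(t)²−L(s,t)²)^{d/2}dt is bounded on (s₀, ∞). Then the following are equivalent, with the same constant c in both: (a) for all s > s₀, γ_{d−2}√(1+s²) ∫_{−x(s)}^{y(s)} (f(t)² − L(s,t)²)^{d/2} dt = c; (b) for all s > s₀, κ_{d−2}(1+s²)^{3/2} ∫_{−x(s)}^{y(s)} (t + h'(s))² (f(t)² − L(s,t)²)^{(d−2)/2} dt = c. -/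

import Mathlib

open MeasureTheory Metric Filter intervalIntegral
open scoped ENNReal Topology

/-- `κ_m`, the volume of the unit Euclidean ball in `ℝ^m`. -/
noncomputable def kappa (m : ℕ) : ℝ :=
  (volume (closedBall (0 : EuclideanSpace ℝ (Fin m)) 1)).toReal

/-- `γ_m = ∫_{B₂^m} p_j² dp` (independent of the coordinate `j` by symmetry). -/
noncomputable def gammaBall (m : ℕ) (h0 : 0 < m) : ℝ :=
  ∫ p in closedBall (0 : EuclideanSpace ℝ (Fin m)) 1, (p ⟨0, h0⟩) ^ 2


open Set in
lemma coord_integral_eq (m : ℕ) (h0 : 0 < m) (j : Fin m) :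
    (∫ p in closedBall (0 : EuclideanSpace ℝ (Fin m)) 1, (p j) ^ 2) = gammaBall m h0 := by
  classical
  set i0 : Fin m := ⟨0, h0⟩
  set e : EuclideanSpace ℝ (Fin m) ≃ₗᵢ[ℝ] EuclideanSpace ℝ (Fin m) :=
    LinearIsometryEquiv.piLpCongrLeft 2 ℝ ℝ (Equiv.swap j i0)
  have hme : MeasurePreserving e volume volume := e.measurePreserving
  have hemb : MeasurableEmbedding e := e.toHomeomorph.measurableEmbedding
  have himg : e '' (closedBall 0 1) = closedBall 0 1 := by
    ext z
    constructor
    · rintro ⟨w, hw, rfl⟩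
      simpa [mem_closedBall, dist_eq_norm] using hw
    · intro hz
      exact ⟨e.symm z, by simpa [mem_closedBall, dist_eq_norm] using hz, by simp⟩
  have key : ∫ p in closedBall (0 : EuclideanSpace ℝ (Fin m)) 1, ((e p) i0) ^ 2
      = ∫ p in closedBall (0 : EuclideanSpace ℝ (Fin m)) 1, (p i0) ^ 2 := by
    rw [← hme.setIntegral_image_emb hemb (fun p => (p i0)^2), himg]
  have he : ∀ p : EuclideanSpace ℝ (Fin m), (e p) i0 = p j := by
    intro p
    simp [e, LinearIsometryEquiv.piLpCongrLeft_apply, Equiv.piCongrLeft'_apply]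
  simp only [he] at key
  rw [gammaBall, ← key]

lemma norm_sq_integral_radial (m : ℕ) (h0 : 0 < m) :
    (∫ p in closedBall (0 : EuclideanSpace ℝ (Fin m)) 1, ‖p‖ ^ 2)
      = m * kappa m / (m + 2) := by
  haveI : Nonempty (Fin m) := ⟨⟨0, h0⟩⟩
  haveI : Nontrivial (EuclideanSpace ℝ (Fin m)) := by
    refine ⟨0, EuclideanSpace.single ⟨0, h0⟩ 1, fun hc => ?_⟩
    have := congrArg (fun v : EuclideanSpace ℝ (Fin m) => v ⟨0, h0⟩) hc.symm
    simp [EuclideanSpace.single_apply] at this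
  set f : ℝ → ℝ := Set.indicator (Set.Icc (0:ℝ) 1) (fun r => r ^ 2) with hf
  have h1 : (fun x : EuclideanSpace ℝ (Fin m) => f ‖x‖)
      = Set.indicator (closedBall 0 1) (fun x => ‖x‖ ^ 2) := by
    funext x
    by_cases hx : ‖x‖ ≤ 1
    · have m1 : ‖x‖ ∈ Set.Icc (0:ℝ) 1 := ⟨norm_nonneg x, hx⟩
      have m2 : x ∈ closedBall (0:EuclideanSpace ℝ (Fin m)) 1 := mem_closedBall_zero_iff.2 hx
      rw [hf, Set.indicator_of_mem m1, Set.indicator_of_mem m2]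
    · have m1 : ‖x‖ ∉ Set.Icc (0:ℝ) 1 := fun hmem => hx hmem.2
      have m2 : x ∉ closedBall (0:EuclideanSpace ℝ (Fin m)) 1 :=
        fun hmem => hx (mem_closedBall_zero_iff.1 hmem)
      rw [hf, Set.indicator_of_notMem m1, Set.indicator_of_notMem m2]
  have h2 := MeasureTheory.integral_fun_norm_addHaar (volume : Measure (EuclideanSpace ℝ (Fin m))) f
  rw [h1] at h2
  rw [MeasureTheory.integral_indicator (measurableSet_closedBall)] at h2
  rw [h2]
  have hdim : Module.finrank ℝ (EuclideanSpace ℝ (Fin m)) = m := finrank_euclideanSpace_fin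
  rw [hdim]
  have h3 : (∫ y in Set.Ioi (0:ℝ), y ^ (m - 1) • f y)
      = ∫ y in Set.Ioi (0:ℝ), Set.indicator (Set.Icc (0:ℝ) 1) (fun y => y ^ (m + 1)) y := by
    refine integral_congr_ae (Filter.Eventually.of_forall fun y => ?_)
    by_cases hy : y ∈ Set.Icc (0:ℝ) 1
    · show y ^ (m-1) • f y = _
      rw [hf]
      rw [Set.indicator_of_mem hy, Set.indicator_of_mem hy, smul_eq_mul, ← pow_add]
      congr 1
      omega
    · show y ^ (m-1) • f y = _
      rw [hf, Set.indicator_of_notMem hy, Set.indicator_of_notMem hy, smul_zero]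
  have h4 : (∫ y in Set.Ioi (0:ℝ), Set.indicator (Set.Icc (0:ℝ) 1) (fun y => y ^ (m + 1)) y)
      = ∫ y in Set.Ioc (0:ℝ) 1, y ^ (m + 1) := by
    have hset : Set.Icc (0:ℝ) 1 ∩ Set.Ioi 0 = Set.Ioc 0 1 := by
      ext z
      simp only [Set.mem_inter_iff, Set.mem_Icc, Set.mem_Ioi, Set.mem_Ioc]
      constructor
      · rintro ⟨⟨_, h2⟩, h3⟩; exact ⟨h3, h2⟩
      · rintro ⟨h3, h2⟩; exact ⟨⟨le_of_lt h3, h2⟩, h3⟩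
    rw [MeasureTheory.integral_indicator measurableSet_Icc, Measure.restrict_restrict measurableSet_Icc, hset]
  rw [h3, h4, ← intervalIntegral.integral_of_le (by norm_num : (0:ℝ) ≤ 1),
    integral_pow]
  have hball : (volume (ball (0:EuclideanSpace ℝ (Fin m)) 1)).toReal = kappa m := by
    rw [kappa, MeasureTheory.Measure.addHaar_closedBall_eq_addHaar_ball]
  rw [measureReal_def, hball, nsmul_eq_mul, smul_eq_mul]
  push_cast
  ring


lemma kappa_eq_gamma (m : ℕ) (h0 : 0 < m) : kappa m = (m + 2) * gammaBall m h0 := by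
  have hnorm : ∀ p : EuclideanSpace ℝ (Fin m), ‖p‖ ^ 2 = ∑ j, (p j) ^ 2 := by
    intro p
    rw [EuclideanSpace.norm_eq, Real.sq_sqrt (Finset.sum_nonneg fun i _ => sq_nonneg _)]
    exact Finset.sum_congr rfl fun i _ => by rw [Real.norm_eq_abs, sq_abs]
  have hint : ∀ j : Fin m, IntegrableOn
      (fun p : EuclideanSpace ℝ (Fin m) => (p j) ^ 2) (closedBall 0 1) volume := by
    intro j
    exact (((EuclideanSpace.proj j).continuous.pow 2).continuousOn).integrableOn_compact
      (isCompact_closedBall 0 1)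
  have hsum : (∫ p in closedBall (0 : EuclideanSpace ℝ (Fin m)) 1, ‖p‖ ^ 2)
      = m * gammaBall m h0 := by
    calc (∫ p in closedBall (0 : EuclideanSpace ℝ (Fin m)) 1, ‖p‖ ^ 2)
        = ∫ p in closedBall (0 : EuclideanSpace ℝ (Fin m)) 1, ∑ j, (p j) ^ 2 :=
          integral_congr_ae (Filter.Eventually.of_forall fun p => hnorm p)
      _ = ∑ j, ∫ p in closedBall (0 : EuclideanSpace ℝ (Fin m)) 1, (p j) ^ 2 :=
          integral_finset_sum _ fun j _ => hint j
      _ = ∑ _j : Fin m, gammaBall m h0 := Finset.sum_congr rfl fun j _ => coord_integral_eq m h0 j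
      _ = m * gammaBall m h0 := by rw [Finset.sum_const, Finset.card_fin, nsmul_eq_mul]
  have hrad := norm_sq_integral_radial m h0
  rw [hsum] at hrad
  have hm : (m : ℝ) ≠ 0 := Nat.cast_ne_zero.2 h0.ne'
  have hm2 : (m : ℝ) + 2 ≠ 0 := by positivity
  field_simp at hrad
  have key : (m:ℝ) * ((↑m + 2) * gammaBall m h0) = (m:ℝ) * kappa m := by
    linear_combination (m:ℝ) * hrad
  exact (mul_left_cancel₀ hm key).symm

lemma boundary_deriv {g : ℝ → ℝ → ℝ} (hg : Continuous fun p : ℝ × ℝ => g p.1 p.2)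
    {b : ℝ → ℝ} {b' s₁ : ℝ} (hb : HasDerivAt b b' s₁) (h0 : g s₁ (b s₁) = 0) :
    HasDerivAt (fun s => ∫ t in (b s₁)..(b s), g s t) 0 s₁ := by
  rw [hasDerivAt_iff_isLittleO]
  simp only [intervalIntegral.integral_same, sub_zero, smul_zero]
  rw [Asymptotics.isLittleO_iff]
  intro ε hε
  obtain ⟨C, hC⟩ := (hb.isBigO_sub).bound
  set C' : ℝ := max C 1 with hC'
  have hC'pos : 0 < C' := lt_of_lt_of_le one_pos (le_max_right _ _)
  have hεC : 0 < ε / C' := div_pos hε hC'pos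
  have hcont : ContinuousAt (fun p : ℝ × ℝ => g p.1 p.2) (s₁, b s₁) := hg.continuousAt
  obtain ⟨δ, hδpos, hδ⟩ := Metric.continuousAt_iff.1 hcont (ε / C') hεC
  have hb_cont : ContinuousAt b s₁ := hb.continuousAt
  have ev1 : ∀ᶠ s in 𝓝 s₁, dist s s₁ < δ := Metric.eventually_nhds_iff.2 ⟨δ, hδpos, fun {_} hy => hy⟩
  have ev2 : ∀ᶠ s in 𝓝 s₁, dist (b s) (b s₁) < δ :=
    hb_cont (Metric.ball_mem_nhds _ hδpos)
  have ev3 : ∀ᶠ s in 𝓝 s₁, ‖b s - b s₁‖ ≤ C * ‖s - s₁‖ := hC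
  filter_upwards [ev1, ev2, ev3] with s h1 h2 h3
  have hbound : ∀ t ∈ Set.uIoc (b s₁) (b s), ‖g s t‖ ≤ ε / C' := by
    intro t ht
    have ht' : t ∈ Set.uIcc (b s₁) (b s) := Set.Ioc_subset_Icc_self ht
    have key : |t - b s₁| ≤ |b s - b s₁| := by
      rcases le_total (b s₁) (b s) with hle | hle
      · rw [Set.uIoc_of_le hle, Set.mem_Ioc] at ht
        rw [abs_of_nonneg (by linarith [ht.1]), abs_of_nonneg (by linarith)]
        linarith [ht.2]
      · rw [Set.uIoc_of_ge hle, Set.mem_Ioc] at ht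
        rw [abs_of_nonpos (by linarith [ht.2]), abs_of_nonpos (by linarith)]
        linarith [ht.1]
    have htd : dist t (b s₁) < δ := by
      rw [Real.dist_eq]
      calc |t - b s₁| ≤ |b s - b s₁| := key
        _ < δ := by rwa [Real.dist_eq] at h2
    have : dist ((s, t) : ℝ × ℝ) (s₁, b s₁) < δ := by
      rw [Prod.dist_eq]
      exact max_lt h1 htd
    have := hδ this
    rw [h0, dist_zero_right] at this
    exact this.le
  calc ‖∫ t in (b s₁)..(b s), g s t‖ ≤ (ε / C') * |b s - b s₁| :=
        intervalIntegral.norm_integral_le_of_norm_le_const hbound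
    _ ≤ (ε / C') * (C' * ‖s - s₁‖) := by
        apply mul_le_mul_of_nonneg_left _ hεC.le
        calc |b s - b s₁| = ‖b s - b s₁‖ := rfl
          _ ≤ C * ‖s - s₁‖ := h3
          _ ≤ C' * ‖s - s₁‖ := mul_le_mul_of_nonneg_right (le_max_left _ _) (norm_nonneg _)
    _ = ε * ‖s - s₁‖ := by field_simp
section helpers
variable {d : ℕ} {f h : ℝ → ℝ}

lemma L_hasDeriv (hh : ContDiff ℝ 1 h) (s t : ℝ) :
    HasDerivAt (fun s => s * t + h s) (t + deriv h s) s := by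
  have h1 : HasDerivAt (fun s : ℝ => s * t) t s := by
    simpa using (hasDerivAt_id s).mul_const t
  exact h1.add ((hh.differentiable one_ne_zero s).hasDerivAt)

lemma u_hasDeriv (hh : ContDiff ℝ 1 h) (s t : ℝ) :
    HasDerivAt (fun s => (f t) ^ 2 - (s * t + h s) ^ 2)
      (-(2 * (s * t + h s) * (t + deriv h s))) s := by
  have := ((L_hasDeriv hh s t).pow 2).const_sub ((f t) ^ 2)
  exact this.congr_deriv (by ring)

lemma g_hasDeriv (hd : 3 ≤ d) (hh : ContDiff ℝ 1 h) (s t : ℝ) :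
    HasDerivAt (fun s => ((f t) ^ 2 - (s * t + h s) ^ 2) ^ ((d : ℝ) / 2))
      (-(d : ℝ) * (s * t + h s) * (t + deriv h s) *
        ((f t) ^ 2 - (s * t + h s) ^ 2) ^ (((d : ℝ) - 2) / 2)) s := by
  have hq1 : (1 : ℝ) ≤ (d : ℝ) / 2 := by
    have : (3 : ℝ) ≤ (d : ℝ) := by exact_mod_cast hd
    linarith
  have := (u_hasDeriv (f := f) hh s t).rpow_const (p := (d : ℝ) / 2) (Or.inr hq1)
  convert this using 1
  rw [show (d : ℝ) / 2 - 1 = ((d : ℝ) - 2) / 2 by ring]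
  ring

lemma u_cont (hf : ContDiff ℝ 1 f) (hh : ContDiff ℝ 1 h) :
    Continuous fun p : ℝ × ℝ => (f p.2) ^ 2 - (p.1 * p.2 + h p.1) ^ 2 := by
  have hfc : Continuous f := hf.continuous
  have hhc : Continuous h := hh.continuous
  fun_prop

lemma g_cont (hd : 3 ≤ d) (hf : ContDiff ℝ 1 f) (hh : ContDiff ℝ 1 h) :
    Continuous fun p : ℝ × ℝ =>
      ((f p.2) ^ 2 - (p.1 * p.2 + h p.1) ^ 2) ^ ((d : ℝ) / 2) := by
  exact (Real.continuous_rpow_const (by positivity)).comp (u_cont hf hh)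

lemma gs_cont (hd : 3 ≤ d) (hf : ContDiff ℝ 1 f) (hh : ContDiff ℝ 1 h) :
    Continuous fun p : ℝ × ℝ =>
      -(d : ℝ) * (p.1 * p.2 + h p.1) * (p.2 + deriv h p.1) *
        ((f p.2) ^ 2 - (p.1 * p.2 + h p.1) ^ 2) ^ (((d : ℝ) - 2) / 2) := by
  have h1 : Continuous fun p : ℝ × ℝ =>
      ((f p.2) ^ 2 - (p.1 * p.2 + h p.1) ^ 2) ^ (((d : ℝ) - 2) / 2) := by
    refine (Real.continuous_rpow_const ?_).comp (u_cont hf hh)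
    have : (3 : ℝ) ≤ (d : ℝ) := by exact_mod_cast hd
    linarith
  have hhc : Continuous h := hh.continuous
  have hdh : Continuous (deriv h) := hh.continuous_deriv le_rfl
  fun_prop

end helpers

set_option maxHeartbeats 1000000 in
lemma I0_hasDeriv {d : ℕ} (hd : 3 ≤ d) {s₀ : ℝ} {f h x y : ℝ → ℝ}
    (hf : ContDiff ℝ 1 f) (hh : ContDiff ℝ 1 h) (hxC : ContDiff ℝ 1 x) (hyC : ContDiff ℝ 1 y)
    (hy : ∀ s > s₀, f (y s) = s * y s + h s)
    (hx : ∀ s > s₀, -f (-x s) = s * (-x s) + h s)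
    (hcm : ∀ s > s₀,
      (∫ t in (-x s)..(y s),
        (t + deriv h s) * ((f t) ^ 2 - (s * t + h s) ^ 2) ^ (((d : ℝ) - 2) / 2)) = 0)
    {s₁ : ℝ} (hs₁ : s₀ < s₁) :
    HasDerivAt (fun s => ∫ t in (-x s)..(y s), ((f t) ^ 2 - (s * t + h s) ^ 2) ^ ((d : ℝ) / 2))
      (-(d : ℝ) * s₁ *
        ∫ t in (-x s₁)..(y s₁),
          (t + deriv h s₁) ^ 2 * ((f t) ^ 2 - (s₁ * t + h s₁) ^ 2) ^ (((d : ℝ) - 2) / 2)) s₁ := by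
  set q : ℝ := (d : ℝ) / 2 with hqdef
  set p : ℝ := ((d : ℝ) - 2) / 2 with hpdef
  have hd3 : (3 : ℝ) ≤ (d : ℝ) := by exact_mod_cast hd
  have hp0 : (0 : ℝ) ≤ p := by rw [hpdef]; linarith
  set g : ℝ → ℝ → ℝ := fun s t => ((f t) ^ 2 - (s * t + h s) ^ 2) ^ q with hgdef
  set gs : ℝ → ℝ → ℝ := fun s t =>
    -(d : ℝ) * (s * t + h s) * (t + deriv h s) *
      ((f t) ^ 2 - (s * t + h s) ^ 2) ^ p with hgsdef
  have hgc : Continuous fun pr : ℝ × ℝ => g pr.1 pr.2 := g_cont hd hf hh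
  have hgsc : Continuous fun pr : ℝ × ℝ => gs pr.1 pr.2 := gs_cont hd hf hh
  have hgct : ∀ s, Continuous fun t => g s t := fun s =>
    hgc.comp (continuous_const.prodMk continuous_id)
  have hgsct : ∀ s, Continuous fun t => gs s t := fun s =>
    hgsc.comp (continuous_const.prodMk continuous_id)
  set A : ℝ := -x s₁ with hA
  set B : ℝ := y s₁ with hB
  -- boundary derivative at y
  have hby : HasDerivAt (fun s => ∫ t in B..(y s), g s t) 0 s₁ := by
    apply boundary_deriv hgc ((hyC.differentiable one_ne_zero) s₁).hasDerivAt
    have := hy s₁ hs₁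
    show ((f (y s₁)) ^ 2 - (s₁ * y s₁ + h s₁) ^ 2) ^ q = 0
    rw [this, sub_self, Real.zero_rpow (by rw [hqdef]; positivity)]
  have hbx : HasDerivAt (fun s => ∫ t in A..(-x s), g s t) 0 s₁ := by
    apply boundary_deriv hgc (((hxC.differentiable one_ne_zero) s₁).hasDerivAt.neg)
    have := hx s₁ hs₁
    show ((f (-x s₁)) ^ 2 - (s₁ * (-x s₁) + h s₁) ^ 2) ^ q = 0
    have h2 : (f (-x s₁)) ^ 2 = (s₁ * (-x s₁) + h s₁) ^ 2 := by
      rw [← this]; ring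
    rw [h2, sub_self, Real.zero_rpow (by rw [hqdef]; positivity)]
  -- middle derivative via dominated convergence
  obtain ⟨C, hC⟩ := (IsCompact.exists_bound_of_continuousOn
    ((isCompact_closedBall s₁ 1).prod isCompact_uIcc)
    hgsc.continuousOn)
  have hmid : HasDerivAt (fun s => ∫ t in A..B, g s t) (∫ t in A..B, gs s₁ t) s₁ := by
    refine (intervalIntegral.hasDerivAt_integral_of_dominated_loc_of_deriv_le
      (F := g) (F' := gs) (x₀ := s₁) (a := A) (b := B) (bound := fun _ => C)
      (ball_mem_nhds s₁ one_pos)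
      (Filter.Eventually.of_forall fun s => (hgct s).aestronglyMeasurable)
      ((hgct s₁).intervalIntegrable _ _)
      ((hgsct s₁).aestronglyMeasurable)
      (Filter.Eventually.of_forall fun t ht s hs => ?_)
      (intervalIntegrable_const)
      (Filter.Eventually.of_forall fun t ht s hs => ?_)).2
    · exact hC (s, t) ⟨ball_subset_closedBall hs, Set.Ioc_subset_Icc_self ht⟩
    · exact g_hasDeriv hd hh s t
  -- assemble
  have hintg : ∀ s a b : ℝ, IntervalIntegrable (fun t => g s t) volume a b :=
    fun s a b => (hgct s).intervalIntegrable _ _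
  have hsplit : ∀ s : ℝ, (∫ t in (-x s)..(y s), g s t)
      = -(∫ t in A..(-x s), g s t) + ((∫ t in A..B, g s t) + (∫ t in B..(y s), g s t)) := by
    intro s
    rw [intervalIntegral.integral_add_adjacent_intervals (hintg s A B) (hintg s B (y s))]
    rw [← intervalIntegral.integral_symm]
    rw [intervalIntegral.integral_add_adjacent_intervals (hintg s (-x s) A) (hintg s A (y s))]
  have hD : HasDerivAt (fun s => ∫ t in (-x s)..(y s), g s t)
      (-(0 : ℝ) + ((∫ t in A..B, gs s₁ t) + 0)) s₁ :=
    ((hbx.neg.add (hmid.add hby))).congr_of_eventuallyEq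
      (Filter.Eventually.of_forall fun s => hsplit s)
  rw [neg_zero, zero_add, add_zero] at hD
  -- identify the integral
  have key : (∫ t in A..B, gs s₁ t)
      = -(d : ℝ) * s₁ *
          ∫ t in A..B, (t + deriv h s₁) ^ 2 * ((f t) ^ 2 - (s₁ * t + h s₁) ^ 2) ^ p := by
    have hup : Continuous fun t => ((f t) ^ 2 - (s₁ * t + h s₁) ^ 2) ^ p := by
      exact (Real.continuous_rpow_const hp0).comp
        ((u_cont hf hh).comp (continuous_const.prodMk continuous_id))
    have hi1 : IntervalIntegrable
        (fun t => (t + deriv h s₁) ^ 2 * ((f t) ^ 2 - (s₁ * t + h s₁) ^ 2) ^ p) volume A B := by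
      exact (((continuous_id.add continuous_const).pow 2).mul hup).intervalIntegrable _ _
    have hi2 : IntervalIntegrable
        (fun t => (t + deriv h s₁) * ((f t) ^ 2 - (s₁ * t + h s₁) ^ 2) ^ p) volume A B := by
      exact ((continuous_id.add continuous_const).mul hup).intervalIntegrable _ _
    have hptwise : ∀ t : ℝ, gs s₁ t
        = (-(d : ℝ) * s₁) * ((t + deriv h s₁) ^ 2 * ((f t) ^ 2 - (s₁ * t + h s₁) ^ 2) ^ p)
          + (-(d : ℝ) * (h s₁ - s₁ * deriv h s₁)) *
              ((t + deriv h s₁) * ((f t) ^ 2 - (s₁ * t + h s₁) ^ 2) ^ p) := by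
      intro t
      show -(d : ℝ) * (s₁ * t + h s₁) * (t + deriv h s₁) * _ = _
      ring
    calc (∫ t in A..B, gs s₁ t)
        = ∫ t in A..B,
            ((-(d : ℝ) * s₁) * ((t + deriv h s₁) ^ 2 * ((f t) ^ 2 - (s₁ * t + h s₁) ^ 2) ^ p)
            + (-(d : ℝ) * (h s₁ - s₁ * deriv h s₁)) *
                ((t + deriv h s₁) * ((f t) ^ 2 - (s₁ * t + h s₁) ^ 2) ^ p)) := by
          exact intervalIntegral.integral_congr fun t _ => hptwise t
      _ = (-(d : ℝ) * s₁) *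
            (∫ t in A..B, (t + deriv h s₁) ^ 2 * ((f t) ^ 2 - (s₁ * t + h s₁) ^ 2) ^ p)
          + (-(d : ℝ) * (h s₁ - s₁ * deriv h s₁)) *
            (∫ t in A..B, (t + deriv h s₁) * ((f t) ^ 2 - (s₁ * t + h s₁) ^ 2) ^ p) := by
          rw [intervalIntegral.integral_add (hi1.const_mul _) (hi2.const_mul _),
            intervalIntegral.integral_const_mul, intervalIntegral.integral_const_mul]
      _ = -(d : ℝ) * s₁ *
            ∫ t in A..B, (t + deriv h s₁) ^ 2 * ((f t) ^ 2 - (s₁ * t + h s₁) ^ 2) ^ p := by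
          rw [hA, hB, hcm s₁ hs₁]
          ring
  rw [key] at hD
  exact hD

lemma const_of_hasDerivAt_zero {G : ℝ → ℝ} {s₀ : ℝ}
    (hG : ∀ s, s₀ < s → HasDerivAt G 0 s)
    {a b : ℝ} (ha : s₀ < a) (hb : s₀ < b) : G a = G b := by
  wlog hab : a ≤ b generalizing a b
  · exact (this hb ha (le_of_not_ge hab)).symm
  rcases eq_or_lt_of_le hab with rfl | hab'
  · rfl
  have hdiff : DifferentiableOn ℝ G (Set.Icc a b) := fun s hs =>
    ((hG s (lt_of_lt_of_le ha hs.1)).differentiableAt).differentiableWithinAt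
  have key := constant_of_derivWithin_zero hdiff ?_ b (Set.right_mem_Icc.2 hab)
  · exact key.symm
  · intro s hs
    have h1 : HasDerivAt G 0 s := hG s (lt_of_lt_of_le ha hs.1)
    exact (h1.hasDerivWithinAt).derivWithin
      ((uniqueDiffOn_Icc hab') s (Set.mem_Icc_of_Ico hs))

theorem moment_condition_equivalence
    (d : ℕ) (hd : 3 ≤ d) (s₀ : ℝ) (hs₀ : 0 ≤ s₀)
    (f h x y : ℝ → ℝ)
    (hf : ContDiff ℝ 1 f) (hh : ContDiff ℝ 1 h)
    (hxC : ContDiff ℝ 1 x) (hyC : ContDiff ℝ 1 y)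
    (hxy : ∀ s > s₀, -x s < y s)
    (hy : ∀ s > s₀, f (y s) = s * y s + h s)
    (hx : ∀ s > s₀, -f (-x s) = s * (-x s) + h s)
    (hpos : ∀ s > s₀, ∀ t ∈ Set.Ioo (-x s) (y s), (s * t + h s) ^ 2 < (f t) ^ 2)
    -- the centroid condition
    (hcm : ∀ s > s₀,
      (∫ t in (-x s)..(y s),
        (t + deriv h s) * ((f t) ^ 2 - (s * t + h s) ^ 2) ^ (((d : ℝ) - 2) / 2)) = 0)
    -- boundedness on (s₀, ∞)
    (hbdd : ∃ M : ℝ, ∀ s > s₀,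
      |gammaBall (d - 2) (by omega) * Real.sqrt (1 + s ^ 2) *
        (∫ t in (-x s)..(y s), ((f t) ^ 2 - (s * t + h s) ^ 2) ^ ((d : ℝ) / 2))| ≤ M) :
    ∀ c : ℝ,
      (∀ s > s₀,
        gammaBall (d - 2) (by omega) * Real.sqrt (1 + s ^ 2) *
          (∫ t in (-x s)..(y s), ((f t) ^ 2 - (s * t + h s) ^ 2) ^ ((d : ℝ) / 2)) = c)
      ↔
      (∀ s > s₀,
        kappa (d - 2) * (1 + s ^ 2) ^ ((3 : ℝ) / 2) *
          (∫ t in (-x s)..(y s),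
            (t + deriv h s) ^ 2 * ((f t) ^ 2 - (s * t + h s) ^ 2) ^ (((d : ℝ) - 2) / 2))
          = c) := by
  intro c
  have hd2 : 0 < d - 2 := by omega
  set γ : ℝ := gammaBall (d - 2) (by omega) with hγ
  set W : ℝ → ℝ := fun s => Real.sqrt (1 + s ^ 2) with hWdef
  set I₀ : ℝ → ℝ := fun s =>
    ∫ t in (-x s)..(y s), ((f t) ^ 2 - (s * t + h s) ^ 2) ^ ((d : ℝ) / 2) with hI₀def
  set I₂ : ℝ → ℝ := fun s =>
    ∫ t in (-x s)..(y s),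
      (t + deriv h s) ^ 2 * ((f t) ^ 2 - (s * t + h s) ^ 2) ^ (((d : ℝ) - 2) / 2) with hI₂def
  have hκ : kappa (d - 2) = (d : ℝ) * γ := by
    rw [kappa_eq_gamma (d - 2) hd2, hγ]
    have h2d : (2 : ℕ) ≤ d := by omega
    rw [Nat.cast_sub h2d]
    push_cast
    ring
  have hWpos : ∀ s : ℝ, 0 < W s := fun s => Real.sqrt_pos.2 (by positivity)
  have hWsq : ∀ s : ℝ, W s ^ 2 = 1 + s ^ 2 := fun s => Real.sq_sqrt (by positivity)
  have hWcube : ∀ s : ℝ, (1 + s ^ 2) ^ ((3 : ℝ) / 2) = W s ^ 3 := by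
    intro s
    rw [show ((3 : ℝ) / 2) = (1 / 2) * ((3 : ℕ) : ℝ) by norm_num,
      Real.rpow_mul (by positivity), Real.rpow_natCast, ← Real.sqrt_eq_rpow]
  have hWd : ∀ s : ℝ, HasDerivAt W (s / W s) s := by
    intro s
    have h1 : HasDerivAt (fun s : ℝ => 1 + s ^ 2) (2 * s) s := by
      simpa using ((hasDerivAt_pow 2 s).const_add 1)
    have h2 := h1.sqrt (by positivity : (0:ℝ) < 1 + s ^ 2).ne'
    convert h2 using 1
    exact (mul_div_mul_left s (Real.sqrt (1 + s ^ 2)) two_ne_zero).symm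
  have hI₀d : ∀ s, s₀ < s → HasDerivAt I₀ (-(d : ℝ) * s * I₂ s) s := fun s hs =>
    I0_hasDeriv hd hf hh hxC hyC hy hx hcm hs
  have hFd : ∀ s, s₀ < s →
      HasDerivAt (fun s => γ * (W s * I₀ s))
        (γ * ((s / W s) * I₀ s + W s * (-(d : ℝ) * s * I₂ s))) s := by
    intro s hs
    exact ((hWd s).mul (hI₀d s hs)).const_mul γ
  constructor
  · -- (a) → (b)
    intro hA s hs
    have hs0 : 0 < s := lt_of_le_of_lt hs₀ hs
    have h1 := hFd s hs
    have h2 : HasDerivAt (fun s => γ * (W s * I₀ s)) 0 s := by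
      have hev : (fun s => γ * (W s * I₀ s)) =ᶠ[nhds s] (fun _ => c) := by
        filter_upwards [Ioi_mem_nhds hs] with r hr
        have hr' : γ * W r * I₀ r = c := hA r hr
        linear_combination hr'
      exact (hasDerivAt_const s c).congr_of_eventuallyEq hev
    have hD0 : γ * ((s / W s) * I₀ s + W s * (-(d : ℝ) * s * I₂ s)) = 0 := h1.unique h2
    have hc : γ * W s * I₀ s = c := hA s hs
    have hw := hWpos s
    show kappa (d - 2) * (1 + s ^ 2) ^ ((3 : ℝ) / 2) * I₂ s = c
    rw [hκ, hWcube s]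
    have e1 : s * (γ * I₀ s - (d : ℝ) * W s ^ 2 * γ * I₂ s) = 0 := by
      have e0 : s * (γ * I₀ s - (d : ℝ) * W s ^ 2 * γ * I₂ s)
          = W s * (γ * ((s / W s) * I₀ s + W s * (-(d : ℝ) * s * I₂ s))) := by
        field_simp
        ring
      rw [e0, hD0, mul_zero]
    have e2 : γ * I₀ s = (d : ℝ) * W s ^ 2 * γ * I₂ s := by
      rcases mul_eq_zero.1 e1 with h' | h'
      · exact absurd h' hs0.ne'
      · linarith
    calc (d : ℝ) * γ * W s ^ 3 * I₂ s = W s * ((d : ℝ) * W s ^ 2 * γ * I₂ s) := by ring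
      _ = W s * (γ * I₀ s) := by rw [← e2]
      _ = c := by rw [← hc]; ring
  · -- (b) → (a)
    intro hB
    set G : ℝ → ℝ := fun s => γ * I₀ s - c * (W s)⁻¹ with hGdef
    have hGd : ∀ s, s₀ < s → HasDerivAt G 0 s := by
      intro s hs
      have hw := hWpos s
      have h1 : HasDerivAt (fun s => (W s)⁻¹) (-(s / W s) / (W s) ^ 2) s := (hWd s).inv hw.ne'
      have h2 : HasDerivAt G (γ * (-(d : ℝ) * s * I₂ s) - c * (-(s / W s) / (W s) ^ 2)) s :=
        ((hI₀d s hs).const_mul γ).sub (h1.const_mul c)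
      have hb : kappa (d - 2) * (1 + s ^ 2) ^ ((3 : ℝ) / 2) * I₂ s = c := hB s hs
      rw [hκ, hWcube s] at hb
      convert h2 using 1
      rw [← hb]
      field_simp
      ring
    have hKconst : ∀ s, s₀ < s → G s = G (s₀ + 1) := fun s hs =>
      const_of_hasDerivAt_zero hGd hs (by linarith)
    obtain ⟨M, hM⟩ := hbdd
    have hK0 : G (s₀ + 1) = 0 := by
      by_contra hK0
      set K := G (s₀ + 1) with hKdef
      have hKpos : 0 < |K| := abs_pos.2 hK0
      set s : ℝ := max (s₀ + 1) ((M + |c| + 1) / |K|) with hsdef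
      have hs1 : s₀ < s := lt_of_lt_of_le (by linarith) (le_max_left _ _)
      have hWs : (M + |c| + 1) / |K| ≤ W s := by
        calc (M + |c| + 1) / |K| ≤ s := le_max_right _ _
          _ ≤ |s| := le_abs_self s
          _ = Real.sqrt (s ^ 2) := (Real.sqrt_sq_eq_abs s).symm
          _ ≤ W s := Real.sqrt_le_sqrt (by linarith)
      have hFs : γ * W s * I₀ s = K * W s + c := by
        have h1 : G s = K := hKconst s hs1
        have h2 : γ * I₀ s - c * (W s)⁻¹ = K := h1
        calc γ * W s * I₀ s = W s * (γ * I₀ s) := by ring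
          _ = W s * (K + c * (W s)⁻¹) := by rw [show γ * I₀ s = K + c * (W s)⁻¹ by linarith]
          _ = K * W s + c := by
              rw [mul_add, mul_comm c, ← mul_assoc, mul_inv_cancel₀ (hWpos s).ne']; ring
      have hMs : |γ * W s * I₀ s| ≤ M := hM s hs1
      rw [hFs] at hMs
      have h3 : M + |c| + 1 ≤ W s * |K| := (div_le_iff₀ hKpos).1 hWs
      have h4 : |K * W s| ≤ |K * W s + c| + |c| := by
        calc |K * W s| = |(K * W s + c) + (-c)| := by ring_nf
          _ ≤ |K * W s + c| + |(-c)| := abs_add_le _ _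
          _ = |K * W s + c| + |c| := by rw [abs_neg]
      have h5 : |K * W s| = |K| * W s := by
        rw [abs_mul, abs_of_pos (hWpos s)]
      linarith [hMs, h3, h4, h5, mul_comm (W s) |K|]
    intro s hs
    show γ * W s * I₀ s = c
    have h1 : G s = 0 := by rw [hKconst s hs, hK0]
    have h2 : γ * I₀ s - c * (W s)⁻¹ = 0 := h1
    have hw := hWpos s
    calc γ * W s * I₀ s = W s * (γ * I₀ s) := by ring
      _ = W s * (c * (W s)⁻¹) := by rw [show γ * I₀ s = c * (W s)⁻¹ by linarith]
      _ = c := by field_simp
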